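/- Let (Z₁, Z₂, ⊥) be a polarity with Galois maps (·)′ and closure W″. Let F : 𝒫(Z₁) → 𝒫(Z₁) be any monotone map and let F̄ be the closure of its restriction to stable sets, F̄(A) = (F(A))″. If F is completely additive and every section of its Galois dual is stable (smoothness), then F̄ distributes over arbitrary joins in the lattice of stable sets: F̄(⋁ᵢ Aᵢ) = ⋁ᵢ F̄(Aᵢ), where ⋁ᵢ Aᵢ = (⋃ᵢ Aᵢ)″. In particular, for a smooth completely additive F, F̄((⋃ᵢ Aᵢ)″) = (⋃ᵢ F(Aᵢ))″ for any family of stable sets Aᵢ. -/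
import Mathlib


def prime1 {Z₁ Z₂ : Type*} (perp : Z₁ → Z₂ → Prop) (U : Set Z₁) : Set Z₂ :=
  {y | ∀ x ∈ U, perp x y}

def prime2 {Z₁ Z₂ : Type*} (perp : Z₁ → Z₂ → Prop) (V : Set Z₂) : Set Z₁ :=
  {x | ∀ y ∈ V, perp x y}

/-- Galois closure on subsets of `Z₁`. -/
def gcl {Z₁ Z₂ : Type*} (perp : Z₁ → Z₂ → Prop) (U : Set Z₁) : Set Z₁ :=
  prime2 perp (prime1 perp U)

/-- Image operator generated by `R ⊆ Z₁ × Z₁`: `F U = ⋃_{z ∈ U} Rz`. -/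
def imF {Z₁ : Type*} (R : Z₁ → Z₁ → Prop) (U : Set Z₁) : Set Z₁ :=
  {x | ∃ z ∈ U, R x z}

lemma subset_gcl {Z₁ Z₂ : Type*} (perp : Z₁ → Z₂ → Prop) (U : Set Z₁) :
    U ⊆ gcl perp U := fun x hx y hy => hy x hx

lemma gcl_mono {Z₁ Z₂ : Type*} (perp : Z₁ → Z₂ → Prop) {U V : Set Z₁}
    (h : U ⊆ V) : gcl perp U ⊆ gcl perp V :=
  fun x hx y hy => hx y (fun u hu => hy u (h hu))

lemma prime1_gcl {Z₁ Z₂ : Type*} (perp : Z₁ → Z₂ → Prop) (U : Set Z₁) :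
    prime1 perp (gcl perp U) = prime1 perp U := by
  apply subset_antisymm
  · exact fun y hy x hx => hy x (subset_gcl perp U hx)
  · exact fun y hy x hx => hx y hy

lemma gcl_idem {Z₁ Z₂ : Type*} (perp : Z₁ → Z₂ → Prop) (U : Set Z₁) :
    gcl perp (gcl perp U) = gcl perp U := by
  exact congrArg (prime2 perp) (prime1_gcl perp U)

theorem stmt15 {Z₁ Z₂ : Type*} {ι : Type*} (perp : Z₁ → Z₂ → Prop)
    (R : Z₁ → Z₁ → Prop)
    -- smoothness: every section `yR′` of the Galois dual relation is stable
    (hsmooth : ∀ y : Z₂,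
      gcl perp {z : Z₁ | y ∈ prime1 perp {x : Z₁ | R x z}}
        = {z : Z₁ | y ∈ prime1 perp {x : Z₁ | R x z}})
    (A : ι → Set Z₁) (hA : ∀ i, gcl perp (A i) = A i) :
    gcl perp (imF R (gcl perp (⋃ i, A i))) = gcl perp (⋃ i, imF R (A i)) := by
  set U := ⋃ i, A i
  have hun : imF R U = ⋃ i, imF R (A i) := by
    ext x
    simp [imF, U, Set.mem_iUnion]
    tauto
  rw [← hun]
  apply subset_antisymm
  · -- imF R (gcl U) ⊆ gcl (imF R U)
    have key : imF R (gcl perp U) ⊆ gcl perp (imF R U) := by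
      rintro x ⟨z, hz, hRz⟩ y hy
      have hUS : U ⊆ {z : Z₁ | y ∈ prime1 perp {x : Z₁ | R x z}} := by
        intro u hu x' hx'
        exact hy x' ⟨u, hu, hx'⟩
      have : z ∈ {z : Z₁ | y ∈ prime1 perp {x : Z₁ | R x z}} := by
        rw [← hsmooth y]
        exact gcl_mono perp hUS hz
      exact this x hRz
    calc gcl perp (imF R (gcl perp U))
        ⊆ gcl perp (gcl perp (imF R U)) := gcl_mono perp key
      _ = gcl perp (imF R U) := gcl_idem perp _
  · apply gcl_mono
    intro x hx
    obtain ⟨z, hz, hRz⟩ := hx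
    exact ⟨z, subset_gcl perp U hz, hRz⟩
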